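/- Let Θ ⊆ ℝ^i and Θ̃ ⊆ ℝ^j be open sets with i ≤ j, let g : Θ̃ → Θ be twice differentiable with surjective Jacobian at every point and with g(Θ̃) = Θ, let f : Θ → ℝ be twice continuously differentiable, and set f̃ = f ∘ g. Then f̃ has a local minimum at a point θ̃* ∈ Θ̃ if and only if f has a local minimum at θ* = g(θ̃*). -/

import Mathlib

open Set Topology

/-- Proposition 1 (local minimum correspondence): with `Θ ⊆ ℝ^i`, `Θ̃ ⊆ ℝ^j` open,
`i ≤ j`, `g` twice differentiable on `Θ̃` with surjective Jacobian everywhere and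
`g(Θ̃) = Θ`, and `f` twice continuously differentiable on `Θ`, the composite
`f̃ = f ∘ g` has a local minimum at `θ̃* ∈ Θ̃` iff `f` has a local minimum at `g θ̃*`. -/
theorem local_min_iff_local_min
    (i j : ℕ) (hij : i ≤ j)
    (Θ : Set (EuclideanSpace ℝ (Fin i))) (Θt : Set (EuclideanSpace ℝ (Fin j)))
    (hΘ : IsOpen Θ) (hΘt : IsOpen Θt)
    (g : EuclideanSpace ℝ (Fin j) → EuclideanSpace ℝ (Fin i))
    (hg1 : ∀ x ∈ Θt, DifferentiableAt ℝ g x)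
    (hg2 : ∀ x ∈ Θt, DifferentiableAt ℝ (fderiv ℝ g) x)
    (hsub : ∀ x ∈ Θt, Function.Surjective (fderiv ℝ g x))
    (himg : g '' Θt = Θ)
    (f : EuclideanSpace ℝ (Fin i) → ℝ)
    (hf : ContDiffOn ℝ 2 f Θ)
    (θtstar : EuclideanSpace ℝ (Fin j)) (hθt : θtstar ∈ Θt) :
    IsLocalMinOn (f ∘ g) Θt θtstar ↔ IsLocalMinOn f Θ (g θtstar) := by
  have hgΘ : g θtstar ∈ Θ := himg ▸ ⟨θtstar, hθt, rfl⟩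
  -- g is C¹ on Θt
  have hC1 : ContDiffOn ℝ 1 g Θt := by
    rw [show (1 : WithTop ℕ∞) = 0 + 1 from rfl, contDiffOn_succ_iff_fderiv_of_isOpen hΘt]
    refine ⟨fun x hx => (hg1 x hx).differentiableWithinAt, by simp, ?_⟩
    rw [contDiffOn_zero]
    exact fun x hx => ((hg2 x hx).continuousAt).continuousWithinAt
  have hstrict : HasStrictFDerivAt g (fderiv ℝ g θtstar) θtstar :=
    (hC1.contDiffAt (hΘt.mem_nhds hθt)).hasStrictFDerivAt one_ne_zero
  have hmap : Filter.map g (𝓝 θtstar) = 𝓝 (g θtstar) :=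
    hstrict.map_nhds_eq_of_surj
      (LinearMap.range_eq_top.2 (hsub θtstar hθt))
  have hnt : 𝓝[Θt] θtstar = 𝓝 θtstar := nhdsWithin_eq_nhds.2 (hΘt.mem_nhds hθt)
  have hn : 𝓝[Θ] (g θtstar) = 𝓝 (g θtstar) := nhdsWithin_eq_nhds.2 (hΘ.mem_nhds hgΘ)
  constructor
  · intro h
    unfold IsLocalMinOn IsMinFilter at h ⊢
    rw [hn, ← hmap, Filter.eventually_map]
    rw [hnt] at h
    exact h
  · intro h
    unfold IsLocalMinOn IsMinFilter at h ⊢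
    rw [hn] at h
    rw [hnt]
    have hc : ContinuousAt g θtstar := (hg1 θtstar hθt).continuousAt
    exact hc.eventually h
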